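/- For every H ∈ (0,1) and every b > 0, the integral of |ξ|^{1−2H}/(ξ⁴ + τ²) over the region D₂(b) := {(τ, ξ) ∈ ℝ² : max(|τ|^{H/2}, |ξ|^H) ≥ b} is at most (2(2−H)/(H(1−H))) · b^{−2}. -/

import Mathlib

open MeasureTheory Set Real ENNReal

lemma reflect_lint (g : ℝ → ℝ≥0∞) (s : Set ℝ) :
    ∫⁻ x in Neg.neg ⁻¹' s, g (-x) = ∫⁻ x in s, g x :=
  (Measure.measurePreserving_neg (volume : Measure ℝ)).setLIntegral_comp_preimage_emb
    (MeasurableEquiv.neg ℝ).measurableEmbedding g s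

lemma tail_bound {p c : ℝ} (hp : p < -1) (hc : 0 < c) :
    ∫⁻ x in {x : ℝ | c ≤ |x|}, ENNReal.ofReal (|x| ^ p)
      ≤ ENNReal.ofReal (2 / (-(p + 1)) * c ^ (p + 1)) := by
  have hIci : ∫⁻ x in Ici c, ENNReal.ofReal (|x| ^ p)
      = ENNReal.ofReal (c ^ (p + 1) / (-(p + 1))) := by
    rw [setLIntegral_congr (Ioi_ae_eq_Ici (a := c) (μ := volume)).symm]
    rw [setLIntegral_congr_fun measurableSet_Ioi
      ((fun x (hx : x ∈ Ioi c) => by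
        rw [abs_of_pos (hc.trans hx)] : ∀ x ∈ Ioi c,
          ENNReal.ofReal (|x| ^ p) = ENNReal.ofReal (x ^ p)))]
    rw [← ofReal_integral_eq_lintegral_ofReal (integrableOn_Ioi_rpow_of_lt hp hc)
      ((ae_restrict_iff' measurableSet_Ioi).2 (ae_of_all _ fun x hx =>
        Real.rpow_nonneg (le_of_lt (hc.trans hx)) p))]
    rw [integral_Ioi_rpow_of_lt hp hc]
    congr 1
    rw [neg_div, div_neg]
  have hset : {x : ℝ | c ≤ |x|} = Iic (-c) ∪ Ici c := by
    ext x
    simp only [mem_setOf_eq, mem_union, mem_Iic, mem_Ici, le_abs, le_neg]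
    tauto
  have hIic : ∫⁻ x in Iic (-c), ENNReal.ofReal (|x| ^ p)
      = ENNReal.ofReal (c ^ (p + 1) / (-(p + 1))) := by
    have himg : Iic (-c) = Neg.neg ⁻¹' (Ici c) := by simp
    rw [himg, ← hIci]
    have := reflect_lint (fun x => ENNReal.ofReal (|x| ^ p)) (Ici c)
    simp only [abs_neg] at this
    exact this
  calc ∫⁻ x in {x : ℝ | c ≤ |x|}, ENNReal.ofReal (|x| ^ p)
      ≤ (∫⁻ x in Iic (-c), ENNReal.ofReal (|x| ^ p))
        + ∫⁻ x in Ici c, ENNReal.ofReal (|x| ^ p) := by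
        rw [hset]; exact lintegral_union_le _ _ _
    _ ≤ ENNReal.ofReal (2 / (-(p + 1)) * c ^ (p + 1)) := by
        have hpos : 0 ≤ c ^ (p + 1) / (-(p + 1)) :=
          div_nonneg (Real.rpow_nonneg hc.le _) (by linarith)
        rw [hIic, hIci, ← ENNReal.ofReal_add hpos hpos]
        exact ENNReal.ofReal_le_ofReal (le_of_eq (by ring))


lemma head_bound {q c : ℝ} (hq : -1 < q) (hc : 0 < c) :
    ∫⁻ x in {x : ℝ | |x| ≤ c}, ENNReal.ofReal (|x| ^ q)
      ≤ ENNReal.ofReal (2 / (q + 1) * c ^ (q + 1)) := by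
  have hq1 : (0:ℝ) < q + 1 := by linarith
  have hIcc : ∫⁻ x in Icc 0 c, ENNReal.ofReal (|x| ^ q)
      = ENNReal.ofReal (c ^ (q + 1) / (q + 1)) := by
    rw [setLIntegral_congr (Ioc_ae_eq_Icc (a := (0:ℝ)) (b := c) (μ := volume)).symm]
    rw [setLIntegral_congr_fun measurableSet_Ioc
      ((fun x (hx : x ∈ Ioc 0 c) => by
        rw [abs_of_pos hx.1] : ∀ x ∈ Ioc 0 c,
          ENNReal.ofReal (|x| ^ q) = ENNReal.ofReal (x ^ q)))]
    rw [← ofReal_integral_eq_lintegral_ofReal ((intervalIntegral.intervalIntegrable_rpow' hq).1)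
      ((ae_restrict_iff' measurableSet_Ioc).2 (ae_of_all _ fun x hx =>
        Real.rpow_nonneg (le_of_lt hx.1) q))]
    rw [← intervalIntegral.integral_of_le hc.le, integral_rpow (Or.inl hq),
      Real.zero_rpow (ne_of_gt hq1), sub_zero]
  have hset : {x : ℝ | |x| ≤ c} ⊆ Icc (-c) 0 ∪ Icc 0 c := by
    intro x hx
    rw [mem_setOf_eq, abs_le] at hx
    rcases le_total x 0 with h | h
    · exact Or.inl ⟨hx.1, h⟩
    · exact Or.inr ⟨h, hx.2⟩
  have hneg : ∫⁻ x in Icc (-c) 0, ENNReal.ofReal (|x| ^ q)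
      = ENNReal.ofReal (c ^ (q + 1) / (q + 1)) := by
    have himg : Icc (-c) (0:ℝ) = Neg.neg ⁻¹' (Icc 0 c) := by simp
    rw [himg, ← hIcc]
    have := reflect_lint (fun x => ENNReal.ofReal (|x| ^ q)) (Icc 0 c)
    simp only [abs_neg] at this
    exact this
  calc ∫⁻ x in {x : ℝ | |x| ≤ c}, ENNReal.ofReal (|x| ^ q)
      ≤ ∫⁻ x in Icc (-c) 0 ∪ Icc 0 c, ENNReal.ofReal (|x| ^ q) :=
        lintegral_mono_set hset
    _ ≤ (∫⁻ x in Icc (-c) 0, ENNReal.ofReal (|x| ^ q))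
        + ∫⁻ x in Icc 0 c, ENNReal.ofReal (|x| ^ q) := lintegral_union_le _ _ _
    _ ≤ ENNReal.ofReal (2 / (q + 1) * c ^ (q + 1)) := by
        have hpos : 0 ≤ c ^ (q + 1) / (q + 1) :=
          div_nonneg (Real.rpow_nonneg hc.le _) hq1.le
        rw [hneg, hIcc, ← ENNReal.ofReal_add hpos hpos]
        exact ENNReal.ofReal_le_ofReal (le_of_eq (by ring))

lemma inner_bound {H : ℝ} (hH0 : 0 < H) (hH1 : H < 1) {τ : ℝ} (hτ : τ ≠ 0) :
    ∫⁻ ξ : ℝ, ENNReal.ofReal (|ξ| ^ (1 - 2*H) / (ξ^4 + τ^2))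
      ≤ ENNReal.ofReal (2 / (1 - H^2) * |τ| ^ (-1 - H)) := by
  have habs : 0 < |τ| := abs_pos.2 hτ
  set r : ℝ := |τ| ^ ((1:ℝ)/2) with hrdef
  have hr : 0 < r := Real.rpow_pos_of_pos habs _
  have htau2 : (0:ℝ) < τ ^ 2 := by positivity
  have hq : (-1:ℝ) < 1 - 2*H := by linarith
  have hp : (-3 - 2*H : ℝ) < -1 := by linarith
  -- measurability
  have hm1 : Measurable fun ξ : ℝ => ENNReal.ofReal (|ξ| ^ (1 - 2*H)) := by fun_prop
  have hm2 : Measurable fun ξ : ℝ => ENNReal.ofReal (|ξ| ^ (1 - 2*H)) * ENNReal.ofReal ((τ^2)⁻¹) :=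
    hm1.mul_const _
  have hm3 : Measurable fun ξ : ℝ => ENNReal.ofReal (|ξ| ^ (-3 - 2*H)) := by fun_prop
  -- piece 1
  have piece1 : ∫⁻ ξ in {ξ : ℝ | |ξ| ≤ r}, ENNReal.ofReal (|ξ| ^ (1 - 2*H) / (ξ^4 + τ^2))
      ≤ ENNReal.ofReal (2 / ((1 - 2*H) + 1) * r ^ ((1 - 2*H) + 1)) * ENNReal.ofReal ((τ^2)⁻¹) := by
    calc ∫⁻ ξ in {ξ : ℝ | |ξ| ≤ r}, ENNReal.ofReal (|ξ| ^ (1 - 2*H) / (ξ^4 + τ^2))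
        ≤ ∫⁻ ξ in {ξ : ℝ | |ξ| ≤ r},
            ENNReal.ofReal (|ξ| ^ (1 - 2*H)) * ENNReal.ofReal ((τ^2)⁻¹) := by
          apply setLIntegral_mono hm2
          intro ξ _
          rw [← ENNReal.ofReal_mul (Real.rpow_nonneg (abs_nonneg _) _), ← div_eq_mul_inv]
          apply ENNReal.ofReal_le_ofReal
          apply div_le_div_of_nonneg_left (Real.rpow_nonneg (abs_nonneg _) _) htau2
          nlinarith [pow_le_pow_left₀ (abs_nonneg ξ) (le_refl |ξ|) 4, sq_nonneg (ξ^2)]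
      _ = (∫⁻ ξ in {ξ : ℝ | |ξ| ≤ r}, ENNReal.ofReal (|ξ| ^ (1 - 2*H)))
            * ENNReal.ofReal ((τ^2)⁻¹) := lintegral_mul_const _ hm1
      _ ≤ ENNReal.ofReal (2 / ((1 - 2*H) + 1) * r ^ ((1 - 2*H) + 1))
            * ENNReal.ofReal ((τ^2)⁻¹) := mul_le_mul_of_nonneg_right (head_bound hq hr) (zero_le)
  -- piece 2
  have piece2 : ∫⁻ ξ in {ξ : ℝ | r ≤ |ξ|}, ENNReal.ofReal (|ξ| ^ (1 - 2*H) / (ξ^4 + τ^2))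
      ≤ ENNReal.ofReal (2 / (-((-3 - 2*H) + 1)) * r ^ ((-3 - 2*H) + 1)) := by
    refine le_trans (setLIntegral_mono hm3 ?_) (tail_bound hp hr)
    intro ξ hξ
    have hξ0 : 0 < |ξ| := lt_of_lt_of_le hr hξ
    apply ENNReal.ofReal_le_ofReal
    have hne : ξ ≠ 0 := abs_pos.1 hξ0
    have h4 : (0:ℝ) < ξ^4 := by positivity
    have heq : |ξ| ^ (1 - 2*H) / (ξ^4) = |ξ| ^ (-3 - 2*H) := by
      have : (ξ:ℝ)^4 = |ξ| ^ ((4:ℕ):ℝ) := by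
        rw [Real.rpow_natCast, ← abs_pow, abs_of_pos h4]
      rw [this, ← Real.rpow_sub hξ0]
      congr 1
      norm_num
      ring
    calc |ξ| ^ (1 - 2*H) / (ξ^4 + τ^2) ≤ |ξ| ^ (1 - 2*H) / (ξ^4) := by
          exact div_le_div_of_nonneg_left (Real.rpow_nonneg (abs_nonneg _) _) h4
            (by nlinarith [sq_nonneg τ])
      _ = |ξ| ^ (-3 - 2*H) := heq
  -- combine
  have hr1 : r ^ ((1 - 2*H) + 1) = |τ| ^ (1 - H) := by
    rw [hrdef, ← Real.rpow_mul (abs_nonneg τ)]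
    congr 1
    ring
  have hr2 : r ^ ((-3 - 2*H) + 1) = |τ| ^ (-1 - H) := by
    rw [hrdef, ← Real.rpow_mul (abs_nonneg τ)]
    congr 1
    ring
  have htau2' : (τ^2)⁻¹ = |τ| ^ (-2 : ℝ) := by
    rw [show ((-2:ℝ)) = -(2:ℝ) by norm_num, Real.rpow_neg (abs_nonneg τ)]
    congr 1
    rw [show ((2:ℝ)) = ((2:ℕ):ℝ) by norm_num, Real.rpow_natCast, sq_abs]
  have key : 2 / ((1 - 2*H) + 1) * r ^ ((1 - 2*H) + 1) * (τ^2)⁻¹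
      + 2 / (-((-3 - 2*H) + 1)) * r ^ ((-3 - 2*H) + 1)
      = 2 / (1 - H^2) * |τ| ^ (-1 - H) := by
    rw [hr1, hr2, htau2', mul_assoc, ← Real.rpow_add habs,
      show (1 - H) + (-2:ℝ) = -1 - H by ring]
    have e1 : (1 - 2*H) + 1 = 2 - 2*H := by ring
    have e2 : (-((-3 - 2*H) + 1) : ℝ) = 2 + 2*H := by ring
    rw [e1, e2, ← add_mul]
    congr 1
    have n1 : (2 - 2*H : ℝ) ≠ 0 := by linarith
    have n2 : (2 + 2*H : ℝ) ≠ 0 := by linarith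
    have n3 : (1 - H^2 : ℝ) ≠ 0 := by nlinarith
    rw [div_add_div _ _ n1 n2, div_eq_div_iff (mul_ne_zero n1 n2) n3]
    ring
  have hnn1 : 0 ≤ 2 / ((1 - 2*H) + 1) * r ^ ((1 - 2*H) + 1) :=
    mul_nonneg (div_nonneg (by norm_num) (by linarith)) (Real.rpow_nonneg hr.le _)
  calc ∫⁻ ξ : ℝ, ENNReal.ofReal (|ξ| ^ (1 - 2*H) / (ξ^4 + τ^2))
      ≤ ∫⁻ ξ in {ξ : ℝ | |ξ| ≤ r} ∪ {ξ : ℝ | r ≤ |ξ|},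
          ENNReal.ofReal (|ξ| ^ (1 - 2*H) / (ξ^4 + τ^2)) := by
        rw [← setLIntegral_univ]
        exact lintegral_mono_set (fun ξ _ => (le_total |ξ| r).elim Or.inl Or.inr)
    _ ≤ (∫⁻ ξ in {ξ : ℝ | |ξ| ≤ r}, ENNReal.ofReal (|ξ| ^ (1 - 2*H) / (ξ^4 + τ^2)))
        + ∫⁻ ξ in {ξ : ℝ | r ≤ |ξ|}, ENNReal.ofReal (|ξ| ^ (1 - 2*H) / (ξ^4 + τ^2)) :=
        lintegral_union_le _ _ _
    _ ≤ ENNReal.ofReal (2 / ((1 - 2*H) + 1) * r ^ ((1 - 2*H) + 1)) * ENNReal.ofReal ((τ^2)⁻¹)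
        + ENNReal.ofReal (2 / (-((-3 - 2*H) + 1)) * r ^ ((-3 - 2*H) + 1)) :=
        add_le_add piece1 piece2
    _ = ENNReal.ofReal (2 / (1 - H^2) * |τ| ^ (-1 - H)) := by
        rw [← ENNReal.ofReal_mul hnn1, ← ENNReal.ofReal_add (by positivity) ?_, key]
        exact mul_nonneg (div_nonneg (by norm_num) (by linarith)) (Real.rpow_nonneg hr.le _)

/-- For every `H ∈ (0,1)` and `b > 0`, the integral of `|ξ|^{1−2H}/(ξ⁴ + τ²)` over
`D₂(b) = {(τ, ξ) : max(|τ|^{H/2}, |ξ|^H) ≥ b}` is at most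
`(2(2−H)/(H(1−H))) b^{−2}`. -/
theorem stmt10 (H b : ℝ) (hH0 : 0 < H) (hH1 : H < 1) (hb : 0 < b) :
    (∫ q in {q : ℝ × ℝ | b ≤ max (|q.1| ^ (H / 2)) (|q.2| ^ H)},
        |q.2| ^ (1 - 2 * H) / (q.2 ^ 4 + q.1 ^ 2)) ≤
      (2 * (2 - H) / (H * (1 - H))) * b ^ (-2 : ℝ) := by
  have hHne : H ≠ 0 := ne_of_gt hH0
  have h1H : (0:ℝ) < 1 - H := by linarith
  have h1H' : (0:ℝ) < 1 + H := by linarith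
  set T : ℝ := b ^ (2 / H) with hTdef
  set S : ℝ := b ^ (1 / H) with hSdef
  have hT0 : 0 < T := Real.rpow_pos_of_pos hb _
  have hS0 : 0 < S := Real.rpow_pos_of_pos hb _
  set f : ℝ × ℝ → ℝ := fun q => |q.2| ^ (1 - 2 * H) / (q.2 ^ 4 + q.1 ^ 2) with hfdef
  have hfnn : ∀ q : ℝ × ℝ, 0 ≤ f q := fun q =>
    div_nonneg (Real.rpow_nonneg (abs_nonneg _) _) (by positivity)
  have hFm : Measurable fun q : ℝ × ℝ => ENNReal.ofReal (f q) := by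
    rw [hfdef]; fun_prop
  have hfm : Measurable f := by rw [hfdef]; fun_prop
  have hRHSnn : 0 ≤ (2 * (2 - H) / (H * (1 - H))) * b ^ (-2 : ℝ) :=
    mul_nonneg (div_nonneg (by nlinarith) (by nlinarith)) (Real.rpow_nonneg hb.le _)
  -- reduce to lintegral
  rw [integral_eq_lintegral_of_nonneg_ae (ae_of_all _ hfnn)
    hfm.aestronglyMeasurable.restrict]
  apply ENNReal.toReal_le_of_le_ofReal hRHSnn
  -- region inclusion
  have hsub : {q : ℝ × ℝ | b ≤ max (|q.1| ^ (H / 2)) (|q.2| ^ H)}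
      ⊆ ({τ : ℝ | T ≤ |τ|} ×ˢ (univ : Set ℝ)) ∪ (Ioo (-T) T ×ˢ {ξ : ℝ | S ≤ |ξ|}) := by
    intro q hq
    simp only [mem_setOf_eq] at hq
    by_cases h : T ≤ |q.1|
    · exact Or.inl ⟨h, trivial⟩
    · push_neg at h
      refine Or.inr ⟨abs_lt.1 h, ?_⟩
      have h1 : |q.1| ^ (H / 2) < b := by
        calc |q.1| ^ (H / 2) < T ^ (H / 2) :=
              Real.rpow_lt_rpow (abs_nonneg _) h (by positivity)
          _ = b := by
              rw [hTdef, ← Real.rpow_mul hb.le]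
              rw [show 2 / H * (H / 2) = 1 by field_simp]
              exact Real.rpow_one b
      have h2 : b ≤ |q.2| ^ H := by
        rcases le_max_iff.1 hq with h' | h'
        · linarith
        · exact h'
      show S ≤ |q.2|
      calc S = b ^ (1 / H) := rfl
        _ ≤ (|q.2| ^ H) ^ (1 / H) :=
            Real.rpow_le_rpow hb.le h2 (by positivity)
        _ = |q.2| := by
            rw [← Real.rpow_mul (abs_nonneg _), show H * (1 / H) = 1 by field_simp,
              Real.rpow_one]
  -- Tonelli
  have tonelli : ∀ (s t : Set ℝ),
      ∫⁻ q in s ×ˢ t, ENNReal.ofReal (f q)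
        = ∫⁻ τ in s, ∫⁻ ξ in t, ENNReal.ofReal (f (τ, ξ)) := by
    intro s t
    rw [Measure.volume_eq_prod, ← Measure.prod_restrict, lintegral_prod _ hFm.aemeasurable]
  have hK : (0:ℝ) ≤ 2 / (1 - H^2) := div_nonneg (by norm_num) (by nlinarith)
  -- part A
  have partA : ∫⁻ q in ({τ : ℝ | T ≤ |τ|} ×ˢ (univ : Set ℝ)), ENNReal.ofReal (f q)
      ≤ ENNReal.ofReal (2 / (1 - H^2) * (2 / H * T ^ (-H))) := by
    rw [tonelli]
    calc ∫⁻ τ in {τ : ℝ | T ≤ |τ|}, ∫⁻ ξ in (univ : Set ℝ), ENNReal.ofReal (f (τ, ξ))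
        ≤ ∫⁻ τ in {τ : ℝ | T ≤ |τ|},
            ENNReal.ofReal (2 / (1 - H^2) * |τ| ^ (-1 - H)) := by
          apply setLIntegral_mono (by fun_prop)
          intro τ hτ
          have hτ0 : τ ≠ 0 := by
            intro h
            rw [mem_setOf_eq, h, abs_zero] at hτ
            exact absurd hτ (not_le.2 hT0)
          rw [Measure.restrict_univ]
          exact inner_bound hH0 hH1 hτ0
      _ = ENNReal.ofReal (2 / (1 - H^2))
            * ∫⁻ τ in {τ : ℝ | T ≤ |τ|}, ENNReal.ofReal (|τ| ^ (-1 - H)) := by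
          rw [← lintegral_const_mul _ (by fun_prop)]
          congr 1 with τ
          rw [← ENNReal.ofReal_mul hK]
      _ ≤ ENNReal.ofReal (2 / (1 - H^2))
            * ENNReal.ofReal (2 / (-((-1 - H) + 1)) * T ^ ((-1 - H) + 1)) :=
          mul_le_mul_of_nonneg_left (tail_bound (by linarith) hT0) (zero_le)
      _ = ENNReal.ofReal (2 / (1 - H^2) * (2 / H * T ^ (-H))) := by
          rw [← ENNReal.ofReal_mul hK]
          congr 2
          rw [show ((-1 - H) + 1 : ℝ) = -H by ring, neg_neg]
  -- part B
  have partB : ∫⁻ q in (Ioo (-T) T ×ˢ {ξ : ℝ | S ≤ |ξ|}), ENNReal.ofReal (f q)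
      ≤ ENNReal.ofReal (2 / (2 + 2*H) * S ^ (-2 - 2*H) * (2 * T)) := by
    rw [tonelli]
    have c2nn : (0:ℝ) ≤ 2 / (2 + 2*H) * S ^ (-2 - 2*H) :=
      mul_nonneg (div_nonneg (by norm_num) (by linarith)) (Real.rpow_nonneg hS0.le _)
    have inner : ∀ τ : ℝ, ∫⁻ ξ in {ξ : ℝ | S ≤ |ξ|}, ENNReal.ofReal (f (τ, ξ))
        ≤ ENNReal.ofReal (2 / (2 + 2*H) * S ^ (-2 - 2*H)) := by
      intro τ
      have step : ∫⁻ ξ in {ξ : ℝ | S ≤ |ξ|}, ENNReal.ofReal (f (τ, ξ))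
          ≤ ∫⁻ ξ in {ξ : ℝ | S ≤ |ξ|}, ENNReal.ofReal (|ξ| ^ (-3 - 2*H)) := by
        apply setLIntegral_mono (by fun_prop)
        intro ξ hξ
        have hξ0 : 0 < |ξ| := lt_of_lt_of_le hS0 hξ
        have hne : ξ ≠ 0 := abs_pos.1 hξ0
        have h4 : (0:ℝ) < ξ^4 := by positivity
        apply ENNReal.ofReal_le_ofReal
        have heq : |ξ| ^ (1 - 2*H) / (ξ^4) = |ξ| ^ (-3 - 2*H) := by
          have h44 : (ξ:ℝ)^4 = |ξ| ^ ((4:ℕ):ℝ) := by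
            rw [Real.rpow_natCast, ← abs_pow, abs_of_pos h4]
          rw [h44, ← Real.rpow_sub hξ0]
          congr 1
          norm_num
          ring
        calc |ξ| ^ (1 - 2*H) / (ξ^4 + τ^2) ≤ |ξ| ^ (1 - 2*H) / (ξ^4) :=
              div_le_div_of_nonneg_left (Real.rpow_nonneg (abs_nonneg _) _) h4
                (by nlinarith [sq_nonneg τ])
          _ = |ξ| ^ (-3 - 2*H) := heq
      refine step.trans ?_
      have := tail_bound (p := -3 - 2*H) (by linarith) hS0
      rwa [show ((-3 - 2*H) + 1 : ℝ) = -2 - 2*H by ring,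
        show (-(-2 - 2*H) : ℝ) = 2 + 2*H by ring] at this
    calc ∫⁻ τ in Ioo (-T) T, ∫⁻ ξ in {ξ : ℝ | S ≤ |ξ|}, ENNReal.ofReal (f (τ, ξ))
        ≤ ∫⁻ _τ in Ioo (-T) T, ENNReal.ofReal (2 / (2 + 2*H) * S ^ (-2 - 2*H)) :=
          setLIntegral_mono (by fun_prop) (fun τ _ => inner τ)
      _ = ENNReal.ofReal (2 / (2 + 2*H) * S ^ (-2 - 2*H)) * volume (Ioo (-T) T) :=
          setLIntegral_const _ _
      _ = ENNReal.ofReal (2 / (2 + 2*H) * S ^ (-2 - 2*H) * (2 * T)) := by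
          rw [Real.volume_Ioo, ← ENNReal.ofReal_mul c2nn]
          congr 2
          ring
  -- final arithmetic
  have hTH : T ^ (-H) = b ^ (-2 : ℝ) := by
    rw [hTdef, ← Real.rpow_mul hb.le]
    congr 1
    field_simp
  have hST : 2 / (2 + 2*H) * S ^ (-2 - 2*H) * (2 * T) = 2 / (1 + H) * b ^ (-2 : ℝ) := by
    rw [hSdef, hTdef, ← Real.rpow_mul hb.le]
    rw [show 2 / (2 + 2*H) * b ^ (1 / H * (-2 - 2*H)) * (2 * b ^ (2 / H))
        = 2 / (1 + H) * (b ^ (1 / H * (-2 - 2*H)) * b ^ (2 / H)) by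
      field_simp]
    rw [← Real.rpow_add hb, show 1 / H * (-2 - 2*H) + 2 / H = -2 by field_simp; ring]
  calc ∫⁻ q in {q : ℝ × ℝ | b ≤ max (|q.1| ^ (H / 2)) (|q.2| ^ H)}, ENNReal.ofReal (f q)
      ≤ ∫⁻ q in ({τ : ℝ | T ≤ |τ|} ×ˢ (univ : Set ℝ)) ∪ (Ioo (-T) T ×ˢ {ξ : ℝ | S ≤ |ξ|}),
          ENNReal.ofReal (f q) := lintegral_mono_set hsub
    _ ≤ (∫⁻ q in ({τ : ℝ | T ≤ |τ|} ×ˢ (univ : Set ℝ)), ENNReal.ofReal (f q))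
        + ∫⁻ q in (Ioo (-T) T ×ˢ {ξ : ℝ | S ≤ |ξ|}), ENNReal.ofReal (f q) :=
        lintegral_union_le _ _ _
    _ ≤ ENNReal.ofReal (2 / (1 - H^2) * (2 / H * T ^ (-H)))
        + ENNReal.ofReal (2 / (2 + 2*H) * S ^ (-2 - 2*H) * (2 * T)) := add_le_add partA partB
    _ ≤ ENNReal.ofReal ((2 * (2 - H) / (H * (1 - H))) * b ^ (-2 : ℝ)) := by
        rw [hTH, hST, ← ENNReal.ofReal_add (by positivity)
          (mul_nonneg (div_nonneg (by norm_num) (by linarith)) (Real.rpow_nonneg hb.le _))]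
        apply ENNReal.ofReal_le_ofReal
        apply le_of_eq
        have n1 : (1 - H^2 : ℝ) ≠ 0 := by nlinarith
        field_simp
        ring
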